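/- Let D be a strongly connected digraph in which every vertex has out-degree at least 2. Then there exists a vertex v such that the digraph obtained from D by deleting v (and all arcs incident with v) is still strongly connected. -/

import Mathlib

open scoped Classical

noncomputable section

/-- `D` has a directed cycle of length `ℓ`: `ℓ` distinct vertices cyclically joined by arcs. -/
def HasDicycle {V : Type*} (A : V → V → Prop) (ℓ : ℕ) : Prop :=
  ∃ c : ZMod ℓ → V, Function.Injective c ∧ ∀ i, A (c i) (c (i + 1))

/-- Strong connectivity: every vertex reachable from every vertex. -/
def Strong {V : Type*} (A : V → V → Prop) : Prop :=
  ∀ u v : V, Relation.ReflTransGen A u v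

def outDeg {V : Type*} [Fintype V] (A : V → V → Prop) (v : V) : ℕ :=
  (Finset.univ.filter fun u => A v u).card

def inDeg {V : Type*} [Fintype V] (A : V → V → Prop) (v : V) : ℕ :=
  (Finset.univ.filter fun u => A u v).card

def arcs {V : Type*} [Fintype V] (A : V → V → Prop) : ℕ :=
  (Finset.univ.filter fun p : V × V => A p.1 p.2).card

section Aux

variable {V : Type*}

/-- The arc relation restricted to a finite vertex set `W`. -/
def RelOn (A : V → V → Prop) (W : Finset V) : V → V → Prop :=
  fun a b => a ∈ W ∧ b ∈ W ∧ A a b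

/-- `A` restricted to `W` is strongly connected. -/
def StrongOn (A : V → V → Prop) (W : Finset V) : Prop :=
  ∀ a ∈ W, ∀ b ∈ W, Relation.ReflTransGen (RelOn A W) a b

theorem relOn_mono (A : V → V → Prop) {W W' : Finset V} (h : W ⊆ W') {a b : V}
    (hab : Relation.ReflTransGen (RelOn A W) a b) :
    Relation.ReflTransGen (RelOn A W') a b :=
  Relation.ReflTransGen.mono (r := RelOn A W) (p := RelOn A W')
    (fun _ _ hxy => ⟨h hxy.1, h hxy.2.1, hxy.2.2⟩) a b hab

/-- A walk from inside `W` to outside `W` crosses the boundary. -/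
theorem first_exit (A : V → V → Prop) (W : Finset V) {a b : V}
    (hab : Relation.ReflTransGen A a b) (ha : a ∈ W) :
    b ∉ W → ∃ x ∈ W, ∃ z, z ∉ W ∧ A x z := by
  induction hab with
  | refl => exact fun hb => absurd ha hb
  | @tail c d hac hcd ih =>
    intro hd
    by_cases hc : c ∈ W
    · exact ⟨c, hc, d, hd, hcd⟩
    · exact ih hc

/-- Extract an indexed walk from a `ReflTransGen` witness. -/
theorem walk_of_rtg (A : V → V → Prop) {a b : V} (hab : Relation.ReflTransGen A a b) :
    ∃ m, ∃ p : ℕ → V, p 0 = a ∧ p m = b ∧ ∀ i < m, A (p i) (p (i + 1)) := by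
  induction hab with
  | refl => exact ⟨0, fun _ => a, rfl, rfl, by omega⟩
  | @tail c d hac hcd ih =>
    obtain ⟨m, p, hp0, hpm, hparc⟩ := ih
    refine ⟨m + 1, fun i => if i ≤ m then p i else d, by simp [hp0], by simp, ?_⟩
    intro i hi
    by_cases h : i + 1 ≤ m
    · have h' : i ≤ m := by omega
      simpa [h, h'] using hparc i (by omega)
    · have him : i = m := by omega
      subst him
      simp [h, hpm, hcd]

/-- Lift strong connectivity on `W` to the subtype avoiding `v`, provided `v ∉ W`. -/
theorem lift_to_subtype (A : V → V → Prop) (W : Finset V) (v : V)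
    (hW : ∀ u ∈ W, u ≠ v) {a b : V}
    (hab : Relation.ReflTransGen (RelOn A W) a b) :
    ∀ (ha : a ≠ v) (hb : b ≠ v),
      Relation.ReflTransGen (fun a b : {u : V // u ≠ v} => A a.1 b.1) ⟨a, ha⟩ ⟨b, hb⟩ := by
  induction hab with
  | refl => exact fun ha hb => .refl
  | @tail c d hac hcd ih =>
    intro ha hd
    exact (ih ha (hW c hcd.1)).tail hcd.2.2

end Aux

theorem stmt11 {V : Type*} [Fintype V] (hcard : 2 ≤ Fintype.card V)
    (A : V → V → Prop) (hirr : ∀ v, ¬ A v v) (hstrong : Strong A)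
    (hout : ∀ v, 2 ≤ outDeg A v) :
    ∃ v : V, Strong (fun a b : {u : V // u ≠ v} => A a.1 b.1) := by
  classical
  have hne : Nonempty V := by
    have : 0 < Fintype.card V := by omega
    exact Fintype.card_pos_iff.mp this
  obtain ⟨w0⟩ := hne
  -- the set of candidate strong proper subsets
  set cand : Finset (Finset V) :=
    Finset.univ.filter (fun W : Finset V => W.Nonempty ∧ W ≠ Finset.univ ∧ StrongOn A W)
    with hcand
  have hcand_ne : cand.Nonempty := by
    refine ⟨{w0}, ?_⟩
    rw [hcand, Finset.mem_filter]
    refine ⟨Finset.mem_univ _, ⟨w0, Finset.mem_singleton_self w0⟩, ?_, ?_⟩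
    · intro h
      have := Finset.card_univ (α := V)
      rw [← h] at this
      simp at this
      omega
    · intro a ha b hb
      rw [Finset.mem_singleton] at ha hb
      subst ha; subst hb
      exact .refl
  obtain ⟨W, hWmem, hWmax⟩ := cand.exists_max_image Finset.card hcand_ne
  rw [hcand, Finset.mem_filter] at hWmem
  obtain ⟨-, hWne, hWnU, hWstrong⟩ := hWmem
  -- find an arc leaving W
  have hWout : ∃ o, o ∉ W := by
    by_contra h
    push_neg at h
    exact hWnU (Finset.eq_univ_iff_forall.mpr h)
  obtain ⟨o, ho⟩ := hWout
  obtain ⟨w, hw⟩ := hWne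
  obtain ⟨x, hxW, z, hzW, hxz⟩ := first_exit A W (hstrong w o) hw ho
  -- shortest walk from z back to W
  have hQ : ∃ t, ∃ p : ℕ → V, p 0 = z ∧ p t ∈ W ∧ ∀ i < t, A (p i) (p (i + 1)) := by
    obtain ⟨m, p, hp0, hpm, hparc⟩ := walk_of_rtg A (hstrong z w)
    exact ⟨m, p, hp0, by rw [hpm]; exact hw, hparc⟩
  set t := Nat.find hQ with ht
  obtain ⟨p, hp0, hptW, hparc⟩ := Nat.find_spec hQ
  rw [← ht] at hptW hparc
  have htmin : ∀ s < t, ¬ ∃ p : ℕ → V, p 0 = z ∧ p s ∈ W ∧ ∀ i < s, A (p i) (p (i + 1)) :=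
    fun s hs => Nat.find_min hQ hs
  have ht0 : 0 < t := by
    rcases Nat.eq_zero_or_pos t with h | h
    swap
    · exact h
    · exfalso
      rw [h] at hptW
      rw [hp0] at hptW
      exact hzW hptW
  -- the vertex set of the walk (excluding the final vertex, which is in W)
  set P : Finset V := (Finset.range t).image p with hP
  set W' : Finset V := W ∪ P with hW'
  have hmemP : ∀ i < t, p i ∈ W' := fun i hi =>
    Finset.mem_union_right _ (Finset.mem_image.mpr ⟨i, Finset.mem_range.mpr hi, rfl⟩)
  have hmem : ∀ i ≤ t, p i ∈ W' := by
    intro i hi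
    rcases lt_or_eq_of_le hi with h | h
    · exact hmemP i h
    · subst h; exact Finset.mem_union_left _ hptW
  have hzP : z ∈ W' := by rw [← hp0]; exact hmemP 0 ht0
  -- reach forward to p t
  have reach1 : ∀ j ≤ t, Relation.ReflTransGen (RelOn A W') (p (t - j)) (p t) := by
    intro j
    induction j with
    | zero => exact fun _ => .refl
    | succ j ih =>
      intro hj
      have e : t - (j + 1) + 1 = t - j := by omega
      have harc : A (p (t - (j + 1))) (p (t - (j + 1) + 1)) := hparc _ (by omega)
      rw [e] at harc
      exact Relation.ReflTransGen.head
        ⟨hmem _ (by omega), hmem _ (by omega), harc⟩ (ih (by omega))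
  -- reach from p 0 forward to any p i
  have reach2 : ∀ i ≤ t, Relation.ReflTransGen (RelOn A W') (p 0) (p i) := by
    intro i
    induction i with
    | zero => intro _; exact .refl
    | succ i ih =>
      intro hi
      exact (ih (by omega)).tail ⟨hmem i (by omega), hmem (i + 1) hi, hparc i (by omega)⟩
  have reachToW : ∀ a ∈ W', ∃ a' ∈ W, Relation.ReflTransGen (RelOn A W') a a' := by
    intro a ha
    rcases Finset.mem_union.mp ha with h | h
    · exact ⟨a, h, .refl⟩
    · obtain ⟨i, hi, rfl⟩ := Finset.mem_image.mp h
      rw [Finset.mem_range] at hi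
      refine ⟨p t, hptW, ?_⟩
      have e : t - (t - i) = i := by omega
      have := reach1 (t - i) (by omega)
      rwa [e] at this
  have reachFromW : ∀ b ∈ W', ∃ b' ∈ W, Relation.ReflTransGen (RelOn A W') b' b := by
    intro b hb
    rcases Finset.mem_union.mp hb with h | h
    · exact ⟨b, h, .refl⟩
    · obtain ⟨i, hi, rfl⟩ := Finset.mem_image.mp h
      rw [Finset.mem_range] at hi
      refine ⟨x, hxW, ?_⟩
      have harc : RelOn A W' x (p 0) := by
        refine ⟨Finset.mem_union_left _ hxW, hmem 0 (by omega), ?_⟩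
        rw [hp0]; exact hxz
      exact Relation.ReflTransGen.head harc (reach2 i (by omega))
  have hW'strong : StrongOn A W' := by
    intro a ha b hb
    obtain ⟨a', ha'W, r1⟩ := reachToW a ha
    obtain ⟨b', hb'W, r2⟩ := reachFromW b hb
    have mid : Relation.ReflTransGen (RelOn A W') a' b' :=
      relOn_mono A Finset.subset_union_left (hWstrong a' ha'W b' hb'W)
    exact (r1.trans mid).trans r2
  -- maximality forces W' = univ
  have hW'univ : W' = Finset.univ := by
    by_contra h
    have hmemcand : W' ∈ cand := by
      rw [hcand, Finset.mem_filter]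
      exact ⟨Finset.mem_univ _, ⟨z, hzP⟩, h, hW'strong⟩
    have hle : W'.card ≤ W.card := hWmax W' hmemcand
    have hlt : W.card < W'.card := by
      apply Finset.card_lt_card
      constructor
      · exact Finset.subset_union_left
      · intro hsub
        exact hzW (hsub hzP)
    omega
  -- if t = 1, we are done; otherwise z has out-degree ≤ 1, a contradiction
  by_cases ht1 : t = 1
  · -- W' = W ∪ {z} = univ, so W = univ \ {z}
    refine ⟨z, ?_⟩
    have hPz : P = {z} := by
      rw [hP, ht1]
      rw [Finset.range_one, Finset.image_singleton, hp0]
    have hWz : ∀ u : V, u ≠ z → u ∈ W := by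
      intro u hu
      have : u ∈ W' := by rw [hW'univ]; exact Finset.mem_univ u
      rcases Finset.mem_union.mp this with h | h
      · exact h
      · rw [hPz, Finset.mem_singleton] at h
        exact absurd h hu
    intro a b
    have ha : a.1 ∈ W := hWz a.1 a.2
    have hb : b.1 ∈ W := hWz b.1 b.2
    have := lift_to_subtype A W z (fun u hu => by
      intro h; subst h; exact hzW hu) (hWstrong a.1 ha b.1 hb) a.2 b.2
    simpa using this
  · exfalso
    have ht2 : 2 ≤ t := by omega
    -- every out-neighbour of z equals p 1
    have hnbr : ∀ u, A z u → u = p 1 := by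
      intro u hu
      by_cases huW : u ∈ W
      · -- walk of length 1 : contradiction with minimality
        exfalso
        refine htmin 1 (by omega) ⟨fun i => if i = 0 then z else u, by simp, by simp [huW], ?_⟩
        intro i hi
        have : i = 0 := by omega
        subst this
        simpa using hu
      · have huW' : u ∈ W' := by rw [hW'univ]; exact Finset.mem_univ u
        rcases Finset.mem_union.mp huW' with h | h
        · exact absurd h huW
        · obtain ⟨j, hj, rfl⟩ := Finset.mem_image.mp h
          rw [Finset.mem_range] at hj
          rcases Nat.lt_or_ge j 2 with hj2 | hj2
          · interval_cases j
            · exfalso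
              rw [hp0] at hu
              exact hirr z hu
            · rfl
          · -- shortcut walk of length t - j + 1 < t
            exfalso
            refine htmin (t - j + 1) (by omega)
              ⟨fun i => if i = 0 then z else p (j + i - 1), by simp, ?_, ?_⟩
            · have e : j + (t - j + 1) - 1 = t := by omega
              simp only [if_neg (by omega : ¬ t - j + 1 = 0), e]
              exact hptW
            · intro i hi
              by_cases hi0 : i = 0
              · subst hi0
                simp only [if_pos rfl, if_neg (by omega : ¬ (0 : ℕ) + 1 = 0)]
                have e : j + (0 + 1) - 1 = j := by omega
                rw [e]
                exact hu
              · simp only [if_neg hi0, if_neg (by omega : ¬ i + 1 = 0)]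
                have e1 : j + (i + 1) - 1 = (j + i - 1) + 1 := by omega
                rw [e1]
                exact hparc (j + i - 1) (by omega)
    have hsub : (Finset.univ.filter fun u => A z u) ⊆ {p 1} := by
      intro u hu
      rw [Finset.mem_filter] at hu
      rw [Finset.mem_singleton]
      exact hnbr u hu.2
    have hcard1 : (Finset.univ.filter fun u => A z u).card ≤ 1 := by
      calc (Finset.univ.filter fun u => A z u).card ≤ ({p 1} : Finset V).card :=
            Finset.card_le_card hsub
        _ = 1 := Finset.card_singleton _
    have := hout z
    rw [outDeg] at this
    omega
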